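/- Let H be a group, h ∈ H non-trivial, n ≥ 3, G = H₁ ∗ ⋯ ∗ Hₙ the free product of n copies of H, and ρ : Bₙ → Aut(G) the Artin type representation associated to (H,h). Set G′ = H₂ ∗ ⋯ ∗ Hₙ, so that G = H₁ ∗ G′. Let u ∈ G be an element whose normal form with respect to the decomposition G = H₁ ∗ G′ starts with h₁⁻¹ and ends with h₁. Then for every k ∈ {2, …, n−1} and every ε ∈ {+1, −1}, the normal form of ρ(σ_k^ε)(u) with respect to the decomposition G = H₁ ∗ G′ also starts with h₁⁻¹ and ends with h₁. -/
import Mathlib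


def braidRels (m : ℕ) : Set (FreeGroup (Fin m)) :=
  { r | (∃ i j : Fin m, (i : ℕ) + 1 = (j : ℕ) ∧
          r = FreeGroup.of i * FreeGroup.of j * FreeGroup.of i *
              (FreeGroup.of j * FreeGroup.of i * FreeGroup.of j)⁻¹) ∨
        (∃ i j : Fin m, (i : ℕ) + 2 ≤ (j : ℕ) ∧
          r = FreeGroup.of i * FreeGroup.of j * (FreeGroup.of j * FreeGroup.of i)⁻¹) }

abbrev BraidGroup (m : ℕ) : Type := PresentedGroup (braidRels m)

def braidGen {m : ℕ} (i : Fin m) : BraidGroup m := PresentedGroup.of i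

def idx0 {n : ℕ} (k : Fin (n - 1)) : Fin n := ⟨k.1, by have := k.2; omega⟩
def idx1 {n : ℕ} (k : Fin (n - 1)) : Fin n := ⟨k.1 + 1, by have := k.2; omega⟩

def IsArtinRep {n : ℕ} {H : Type} [Group H] (h : H)
    (ρ : BraidGroup (n - 1) →* MulAut (Monoid.CoprodI (fun _ : Fin n => H))) : Prop :=
  ∀ k : Fin (n - 1),
    (∀ y : H, ρ (braidGen k) (Monoid.CoprodI.of (i := idx0 k) y) =
        (Monoid.CoprodI.of (i := idx0 k) h)⁻¹ * Monoid.CoprodI.of (i := idx1 k) y *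
          Monoid.CoprodI.of (i := idx0 k) h) ∧
    (∀ y : H, ρ (braidGen k) (Monoid.CoprodI.of (i := idx1 k) y) =
        Monoid.CoprodI.of (i := idx0 k) h * Monoid.CoprodI.of (i := idx0 k) y *
          (Monoid.CoprodI.of (i := idx0 k) h)⁻¹) ∧
    (∀ j : Fin n, j ≠ idx0 k → j ≠ idx1 k →
      ∀ y : H, ρ (braidGen k) (Monoid.CoprodI.of (i := j) y) = Monoid.CoprodI.of (i := j) y)

/-- `u` has (free-product) normal form with respect to the decomposition `G = H₁ ∗ G′`
which starts with `h₁⁻¹` and ends with `h₁`. -/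
def NFStartsEnds {G : Type} [Group G] (H1 G' : Subgroup G) (h1 : G) (u : G) : Prop :=
  ∃ (m : ℕ) (w v : ℕ → G), 1 ≤ m ∧
    (∀ i < m, w i ∈ G' ∧ w i ≠ 1) ∧
    (∀ i, i + 1 < m → v i ∈ H1 ∧ v i ≠ 1) ∧
    v (m - 1) = h1 ∧
    u = h1⁻¹ * ((List.range m).map (fun i => w i * v i)).prod

theorem nf_starts_ends_sigmak {H : Type} [Group H] (h : H) (hh : h ≠ 1) (n : ℕ) (hn : 3 ≤ n)
    (ρ : BraidGroup (n - 1) →* MulAut (Monoid.CoprodI (fun _ : Fin n => H)))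
    (hρ : IsArtinRep h ρ)
    (u : Monoid.CoprodI (fun _ : Fin n => H))
    (hu : NFStartsEnds
      (MonoidHom.range (Monoid.CoprodI.of (M := fun _ : Fin n => H) (i := ⟨0, by omega⟩)))
      (⨆ (j : Fin n) (_ : j ≠ (⟨0, by omega⟩ : Fin n)),
        MonoidHom.range (Monoid.CoprodI.of (M := fun _ : Fin n => H) (i := j)))
      (Monoid.CoprodI.of (i := (⟨0, by omega⟩ : Fin n)) h) u)
    (k : Fin (n - 1)) (hk : 1 ≤ (k : ℕ)) (ε : ℤ) (hε : ε = 1 ∨ ε = -1) :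
    NFStartsEnds
      (MonoidHom.range (Monoid.CoprodI.of (M := fun _ : Fin n => H) (i := ⟨0, by omega⟩)))
      (⨆ (j : Fin n) (_ : j ≠ (⟨0, by omega⟩ : Fin n)),
        MonoidHom.range (Monoid.CoprodI.of (M := fun _ : Fin n => H) (i := j)))
      (Monoid.CoprodI.of (i := (⟨0, by omega⟩ : Fin n)) h)
      (ρ ((braidGen k) ^ ε) u) := by
    classical
  set i0 : Fin n := ⟨0, by omega⟩ with hi0def
  set G' : Subgroup (Monoid.CoprodI (fun _ : Fin n => H)) :=
    (⨆ (j : Fin n) (_ : j ≠ i0),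
      MonoidHom.range (Monoid.CoprodI.of (M := fun _ : Fin n => H) (i := j))) with hG'def
  set ψ : MulAut (Monoid.CoprodI (fun _ : Fin n => H)) := ρ (braidGen k) with hψdef
  have ne0 : idx0 k ≠ i0 := by
    intro hcon
    have : (idx0 k).1 = (0 : ℕ) := by rw [hcon]
    simp [idx0] at this; omega
  have ne1 : idx1 k ≠ i0 := by
    intro hcon
    have : (idx1 k).1 = (0 : ℕ) := by rw [hcon]
    simp [idx1] at this
  have ne01 : idx0 k ≠ idx1 k := by
    intro hcon
    have : (idx0 k).1 = (idx1 k).1 := by rw [hcon]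
    simp [idx0, idx1] at this
  have memG' : ∀ (j : Fin n), j ≠ i0 → ∀ y : H,
      Monoid.CoprodI.of (i := j) y ∈ G' := fun j hj y =>
    Subgroup.mem_iSup_of_mem j (Subgroup.mem_iSup_of_mem hj ⟨y, rfl⟩)
  have hfix : ∀ y : H, ψ (Monoid.CoprodI.of (i := i0) y) = Monoid.CoprodI.of (i := i0) y :=
    fun y => (hρ k).2.2 i0 (Ne.symm ne0) (Ne.symm ne1) y
  have hψmem : ∀ g ∈ G', ψ g ∈ G' := by
    have key : G' ≤ Subgroup.comap (ψ : Monoid.CoprodI (fun _ : Fin n => H) →*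
        Monoid.CoprodI (fun _ : Fin n => H)) G' := by
      refine iSup_le fun j => iSup_le fun hj => ?_
      rintro x ⟨y, rfl⟩
      show ψ (Monoid.CoprodI.of (i := j) y) ∈ G'
      by_cases h0 : j = idx0 k
      · subst h0
        rw [(hρ k).1 y]
        exact mul_mem (mul_mem (inv_mem (memG' _ ne0 h)) (memG' _ ne1 y)) (memG' _ ne0 h)
      by_cases h1 : j = idx1 k
      · subst h1
        rw [(hρ k).2.1 y]
        exact mul_mem (mul_mem (memG' _ ne0 h) (memG' _ ne0 y)) (inv_mem (memG' _ ne0 h))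
      · rw [(hρ k).2.2 j h0 h1 y]
        exact memG' j hj y
    exact fun g hg => key hg
  have hψsurj : ∀ (j : Fin n), j ≠ i0 → ∀ y : H,
      ∃ g ∈ G', ψ g = Monoid.CoprodI.of (i := j) y := by
    intro j hj y
    by_cases h0 : j = idx0 k
    · subst h0
      refine ⟨(Monoid.CoprodI.of (i := idx1 k) h)⁻¹ * Monoid.CoprodI.of (i := idx1 k) y *
          Monoid.CoprodI.of (i := idx1 k) h,
        mul_mem (mul_mem (inv_mem (memG' _ ne1 h)) (memG' _ ne1 y)) (memG' _ ne1 h), ?_⟩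
      rw [map_mul, map_mul, map_inv, (hρ k).2.1 y, (hρ k).2.1 h]
      group
    by_cases h1 : j = idx1 k
    · subst h1
      refine ⟨Monoid.CoprodI.of (i := idx1 k) h * Monoid.CoprodI.of (i := idx0 k) y *
          (Monoid.CoprodI.of (i := idx1 k) h)⁻¹,
        mul_mem (mul_mem (memG' _ ne1 h) (memG' _ ne0 y)) (inv_mem (memG' _ ne1 h)), ?_⟩
      rw [map_mul, map_mul, map_inv, (hρ k).1 y, (hρ k).2.1 h]
      group
    · exact ⟨Monoid.CoprodI.of (i := j) y, memG' j hj y, (hρ k).2.2 j h0 h1 y⟩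
  -- properties of φ = ρ (braidGen k ^ ε)
  set φ : MulAut (Monoid.CoprodI (fun _ : Fin n => H)) := ρ (braidGen k ^ ε) with hφdef
  have hφeq : φ = ψ ^ ε := by rw [hφdef, hψdef, map_zpow]
  have hφfix : ∀ y : H, φ (Monoid.CoprodI.of (i := i0) y) = Monoid.CoprodI.of (i := i0) y := by
    intro y
    rcases hε with hε | hε <;> subst hε
    · rw [hφeq, zpow_one]; exact hfix y
    · rw [hφeq, zpow_neg_one]
      have := hfix y
      nth_rewrite 1 [← this]
      exact MulAut.inv_apply_self _ ψ _
  have hφmem : ∀ g ∈ G', φ g ∈ G' := by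
    rcases hε with hε | hε <;> subst hε
    · intro g hg; rw [hφeq, zpow_one]; exact hψmem g hg
    · have key : G' ≤ Subgroup.comap ((ψ⁻¹ : MulAut _) : Monoid.CoprodI (fun _ : Fin n => H) →*
          Monoid.CoprodI (fun _ : Fin n => H)) G' := by
        refine iSup_le fun j => iSup_le fun hj => ?_
        rintro x ⟨y, rfl⟩
        obtain ⟨g, hg, hgeq⟩ := hψsurj j hj y
        show (ψ⁻¹ : MulAut _) (Monoid.CoprodI.of (i := j) y) ∈ G'
        rw [← hgeq]
        rw [MulAut.inv_apply_self]; exact hg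
      intro g hg
      rw [hφeq, zpow_neg_one]
      exact key hg
  have hφinj : Function.Injective φ := φ.injective
  -- now transport the normal form
  obtain ⟨m, w, v, hm, hw, hv, hvlast, huval⟩ := hu
  refine ⟨m, fun i => φ (w i), v, hm, ?_, hv, hvlast, ?_⟩
  · intro i hi
    refine ⟨hφmem _ (hw i hi).1, ?_⟩
    intro hcon
    have hcon' : φ (w i) = φ 1 := by simpa using hcon
    exact (hw i hi).2 (hφinj hcon')
  · have h1fix : φ (Monoid.CoprodI.of (i := i0) h) = Monoid.CoprodI.of (i := i0) h := hφfix h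
    rw [huval, map_mul, map_inv, h1fix, map_list_prod, List.map_map]
    have hlmap : List.map (⇑φ ∘ fun i => w i * v i) (List.range m) =
        List.map (fun i => φ (w i) * v i) (List.range m) := by
      refine List.map_congr_left fun i hi => ?_
      rw [List.mem_range] at hi
      show φ (w i * v i) = φ (w i) * v i
      rw [map_mul]
      congr 1
      by_cases hlt : i + 1 < m
      · obtain ⟨y, hy⟩ := (hv i hlt).1
        rw [← hy]; exact hφfix y
      · have : i = m - 1 := by omega
        rw [this, hvlast]; exact hφfix h
    rw [hlmap]
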